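/- Let A be an affine integral domain over a field k and let φ be a non-trivial exponential map on A. Then there exists a nonzero element c ∈ A^φ such that the localization A[c^{-1}] is isomorphic, as an A^φ[c^{-1}]-algebra, to the polynomial ring in one variable over A^φ[c^{-1}]. -/

import Mathlib

open Polynomial

/-- A `k`-algebra homomorphism `φ : A → A[U]` is an *exponential map* if evaluating `U` at `0`
gives the identity and `φ_V φ_U = φ_{V+U}` (comultiplicativity). -/
def IsExponentialMap {k A : Type*} [CommSemiring k] [CommSemiring A] [Algebra k A]
    (φ : A →ₐ[k] A[X]) : Prop :=
  (∀ a : A, (φ a).eval 0 = a) ∧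
  (∀ a : A, (φ a).map (φ : A →+* A[X]) =
      (φ a).eval₂ ((C : A[X] →+* A[X][X]).comp (C : A →+* A[X])) (C X + X))

/-- The ring of invariants `A^φ = {a ∈ A | φ(a) = a}` of a `k`-algebra map `φ : A → A[U]`,
as a subalgebra of `A`. -/
def expInv {k A : Type*} [CommSemiring k] [CommSemiring A] [Algebra k A]
    (φ : A →ₐ[k] A[X]) : Subalgebra k A where
  carrier := {a | φ a = C a}
  mul_mem' := fun {a b} ha hb => by
    simp only [Set.mem_setOf_eq] at *
    rw [map_mul, ha, hb, ← C_mul]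
  add_mem' := fun {a b} ha hb => by
    simp only [Set.mem_setOf_eq] at *
    rw [map_add, ha, hb, ← C_add]
  algebraMap_mem' := fun r => by
    simp only [Set.mem_setOf_eq, AlgHom.commutes, Polynomial.algebraMap_apply]

/-- An exponential map is non-trivial if its ring of invariants is a proper subring. -/
def IsNontrivialExpMap {k A : Type*} [CommSemiring k] [CommSemiring A] [Algebra k A]
    (φ : A →ₐ[k] A[X]) : Prop :=
  IsExponentialMap φ ∧ expInv φ ≠ ⊤

/-- The Derksen invariant: the `k`-subalgebra of `A` generated by the invariants of all
non-trivial exponential maps on `A`. -/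
def DerksenInvariant (k A : Type*) [CommSemiring k] [CommSemiring A] [Algebra k A] :
    Subalgebra k A :=
  Algebra.adjoin k {a : A | ∃ φ : A →ₐ[k] A[X], IsNontrivialExpMap φ ∧ a ∈ expInv φ}

/-- The transcendence degree of a commutative `k`-algebra `A`: the supremum of the
cardinalities of algebraically independent subsets of `A`. -/
noncomputable def trdeg (k A : Type*) [CommRing k] [CommRing A] [Algebra k A] : Cardinal :=
  ⨆ s : {s : Set A // AlgebraicIndependent k ((↑) : s → A)}, Cardinal.mk s.1



private lemma aux_not_dvd_choose_pow {p : ℕ} (hp : p.Prime) :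
    ∀ (w d : ℕ), (d / p ^ w) % p ≠ 0 → ¬ p ∣ d.choose (p ^ w) := by
  haveI : Fact p.Prime := ⟨hp⟩
  intro w
  induction w with
  | zero =>
    intro d hd
    simpa [Nat.choose_one_right, Nat.dvd_iff_mod_eq_zero] using hd
  | succ w ih =>
    intro d hd
    have hlucas := Choose.choose_modEq_choose_mod_mul_choose_div_nat
      (n := d) (k := p ^ (w + 1)) (p := p)
    have h1 : p ^ (w + 1) % p = 0 := by
      rw [pow_succ]; exact Nat.mul_mod_left _ _
    have h2 : p ^ (w + 1) / p = p ^ w := by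
      rw [pow_succ]; exact Nat.mul_div_cancel _ hp.pos
    rw [h1, h2, Nat.choose_zero_right, one_mul] at hlucas
    have hih : ¬ p ∣ (d / p).choose (p ^ w) := by
      apply ih
      have h3 : d / p / p ^ w = d / p ^ (w + 1) := by
        rw [Nat.div_div_eq_div_mul, ← pow_succ']
      rwa [h3]
    intro hcon
    apply hih
    have h4 : d.choose (p ^ (w + 1)) % p = (d / p).choose (p ^ w) % p := hlucas
    rw [Nat.dvd_iff_mod_eq_zero] at hcon ⊢
    omega

private lemma aux_eq_pow_of_dvd_choose {p n : ℕ} (hp : p.Prime) (hn : 1 ≤ n)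
    (h : ∀ j, 0 < j → j < n → p ∣ n.choose j) : ∃ e, n = p ^ e := by
  have hnm : p ^ n.factorization p * (n / p ^ n.factorization p) = n :=
    Nat.ordProj_mul_ordCompl_eq_self n p
  set v := n.factorization p with hv
  set m := n / p ^ v with hm
  have hmd : ¬ p ∣ m := Nat.not_dvd_ordCompl hp (by omega)
  have hm1 : 1 ≤ m := by
    rcases Nat.eq_zero_or_pos m with h0 | h0
    · rw [h0, mul_zero] at hnm; omega
    · exact h0
  rcases eq_or_lt_of_le hm1 with h1 | h1
  · refine ⟨v, ?_⟩
    rw [← hnm, ← h1, mul_one]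
  · exfalso
    have hppos : 0 < p ^ v := pow_pos hp.pos v
    have hjlt : p ^ v < n := by nlinarith
    have hdvd := h (p ^ v) hppos hjlt
    have : ¬ p ∣ n.choose (p ^ v) := by
      apply aux_not_dvd_choose_pow hp
      rw [← hm]
      intro hc
      exact hmd (Nat.dvd_iff_mod_eq_zero.mpr hc)
    exact this hdvd

private lemma aux_exists_good_j {p : ℕ} (hp : p.Prime) (e d : ℕ) (hd : p ^ e ≤ d)
    (hnd : ¬ p ^ e ∣ d) :
    ∃ j, 0 < j ∧ j ≤ d ∧ ¬ p ∣ d.choose j ∧ ¬ p ^ e ∣ (d - j) := by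
  have hrne : d % p ^ e ≠ 0 := fun hc => hnd (Nat.dvd_iff_mod_eq_zero.mpr hc)
  set r := d % p ^ e with hr
  have hrpos : 0 < r := Nat.pos_of_ne_zero hrne
  have hppos : 0 < p ^ e := pow_pos hp.pos e
  have hrlt : r < p ^ e := Nat.mod_lt d hppos
  have hpw : p ^ r.factorization p ∣ r := Nat.ordProj_dvd r p
  have hqw : ¬ p ∣ r / p ^ r.factorization p := Nat.not_dvd_ordCompl hp hrne
  set w := r.factorization p with hw
  have hpwle : p ^ w ≤ r := Nat.le_of_dvd hrpos hpw
  have hwlt : w < e := by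
    have : p ^ w < p ^ e := lt_of_le_of_lt hpwle hrlt
    exact (Nat.pow_lt_pow_iff_right hp.one_lt).mp this
  have hrled : r ≤ d := Nat.mod_le d _
  by_cases hcase : r = p ^ w
  · -- take j = p ^ (e + u) with u = (d / p^e).factorization p
    have hdeq : p ^ e * (d / p ^ e) + r = d := Nat.div_add_mod d (p ^ e)
    set qd := d / p ^ e with hqd
    have hqdpos : 0 < qd := by
      rcases Nat.eq_zero_or_pos qd with h0 | h0
      · exfalso; rw [h0, mul_zero] at hdeq; omega
      · exact h0
    have hpu : p ^ qd.factorization p ∣ qd := Nat.ordProj_dvd qd p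
    have hqu : ¬ p ∣ qd / p ^ qd.factorization p := Nat.not_dvd_ordCompl hp (by omega)
    set u := qd.factorization p with hu
    have hpule : p ^ u ≤ qd := Nat.le_of_dvd hqdpos hpu
    have hjle : p ^ (e + u) ≤ d := by
      calc p ^ (e + u) = p ^ e * p ^ u := pow_add p e u
        _ ≤ p ^ e * qd := Nat.mul_le_mul_left _ hpule
        _ ≤ d := by omega
    refine ⟨p ^ (e + u), pow_pos hp.pos _, hjle, ?_, ?_⟩
    · apply aux_not_dvd_choose_pow hp
      have hdiv : d / p ^ (e + u) = qd / p ^ u := by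
        rw [pow_add, ← Nat.div_div_eq_div_mul, ← hqd]
      rw [hdiv]
      intro hc
      exact hqu (Nat.dvd_iff_mod_eq_zero.mpr hc)
    · intro hc
      apply hnd
      have hpej : p ^ e ∣ p ^ (e + u) := pow_dvd_pow p (by omega)
      have : d = (d - p ^ (e + u)) + p ^ (e + u) := by omega
      rw [this]
      exact Nat.dvd_add hc hpej
  · have hjle : p ^ w ≤ d := le_trans hpwle hrled
    refine ⟨p ^ w, pow_pos hp.pos _, hjle, ?_, ?_⟩
    · apply aux_not_dvd_choose_pow hp
      have hdeq : p ^ e * (d / p ^ e) + r = d := Nat.div_add_mod d (p ^ e)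
      have h1 : p ^ e = p ^ w * p ^ (e - w) := by rw [← pow_add]; congr 1; omega
      obtain ⟨t, ht⟩ := hpw
      have hwpos : 0 < p ^ w := pow_pos hp.pos w
      have hdd : d = p ^ w * (p ^ (e - w) * (d / p ^ e) + t) := by
        rw [Nat.mul_add, ← mul_assoc, ← h1, ← ht]; omega
      have hdiv : d / p ^ w = p ^ (e - w) * (d / p ^ e) + t := by
        conv_lhs => rw [hdd]
        rw [Nat.mul_div_cancel_left _ hwpos]
      rw [hdiv]
      have ht' : t = r / p ^ w := by rw [ht, Nat.mul_div_cancel_left _ hwpos]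
      have hpd : p ∣ p ^ (e - w) * (d / p ^ e) :=
        Dvd.dvd.mul_right (dvd_pow_self p (by omega)) _
      obtain ⟨z, hz⟩ := hpd
      intro hc
      rw [hz, Nat.mul_add_mod] at hc
      exact hqw (ht' ▸ Nat.dvd_iff_mod_eq_zero.mpr hc)
    · intro hc
      apply hcase
      have hd2 : (d - p ^ w) + p ^ w = d := by omega
      have h3 : r = ((d - p ^ w) + p ^ w) % p ^ e := by rw [hd2]
      obtain ⟨z, hz⟩ := hc
      have hwe : p ^ w < p ^ e := Nat.pow_lt_pow_right hp.one_lt hwlt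
      rw [hz, Nat.mul_add_mod] at h3
      exact h3.trans (Nat.mod_eq_of_lt hwe)

section Aux

variable {k A : Type*} [Field k] [CommRing A] [IsDomain A] [Algebra k A]

lemma aux_coeff_CX_add_X_pow (i j : ℕ) :
    (((C (X : A[X]) + X : A[X][X])) ^ i).coeff j = (i.choose j) • ((X : A[X]) ^ (i - j)) := by
  rw [add_pow]
  rw [finset_sum_coeff]
  by_cases hji : j ≤ i
  · rw [Finset.sum_eq_single (i - j)]
    · have h1 : (C (X : A[X])) ^ (i - j) = C ((X : A[X]) ^ (i - j)) := by rw [map_pow]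
      have h2 : i - (i - j) = j := by omega
      rw [h1, h2]
      rw [mul_assoc, coeff_C_mul]
      have h3 : ((X : A[X][X]) ^ j * (i.choose (i - j) : A[X][X])).coeff j
          = (i.choose (i - j) : A[X]) := by
        rw [mul_comm, coeff_natCast_mul, coeff_X_pow, if_pos rfl, mul_one]
      rw [h3, Nat.choose_symm hji]
      rw [nsmul_eq_mul, mul_comm]
    · intro b hb hbne
      have h1 : (C (X : A[X])) ^ b = C ((X : A[X]) ^ b) := by rw [map_pow]
      rw [h1, mul_assoc, coeff_C_mul]
      rw [mul_comm ((X : A[X][X]) ^ (i - b)), coeff_natCast_mul, coeff_X_pow]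
      rw [Finset.mem_range] at hb
      rw [if_neg (by omega), mul_zero, mul_zero]
    · intro h
      exact absurd (Finset.mem_range.mpr (by omega)) h
  · rw [Finset.sum_eq_zero, Nat.choose_eq_zero_of_lt (by omega), zero_smul]
    intro b hb
    rw [Finset.mem_range] at hb
    have h1 : (C (X : A[X])) ^ b = C ((X : A[X]) ^ b) := by rw [map_pow]
    rw [h1, mul_assoc, coeff_C_mul]
    rw [mul_comm ((X : A[X][X]) ^ (i - b)), coeff_natCast_mul, coeff_X_pow]
    rw [if_neg (by omega), mul_zero, mul_zero]

lemma aux_key (φ : A →ₐ[k] A[X]) (hφ : IsExponentialMap φ) (a : A) (j : ℕ) :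
    φ ((φ a).coeff j) = ∑ i ∈ Finset.range ((φ a).natDegree + 1),
      C ((i.choose j : A) * (φ a).coeff i) * (X : A[X]) ^ (i - j) := by
  have hconv : ∀ (n : ℕ) (b : A) (t : ℕ), n • (C b * (X : A[X]) ^ t) = C ((n : A) * b) * X ^ t := by
    intro n b t
    rw [nsmul_eq_mul, ← mul_assoc, ← C_eq_natCast, ← C_mul]
  simp only [← hconv]
  have h := hφ.2 a
  have h2 := congrArg (fun q => q.coeff j) h
  rw [coeff_map] at h2
  rw [eval₂_eq_sum_range] at h2
  rw [finset_sum_coeff] at h2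
  have h3 : ∀ i ∈ Finset.range ((φ a).natDegree + 1),
      (((C : A[X] →+* A[X][X]).comp (C : A →+* A[X])) ((φ a).coeff i) * (C X + X) ^ i).coeff j
      = (i.choose j) • (C ((φ a).coeff i) * (X : A[X]) ^ (i - j)) := by
    intro i _
    rw [RingHom.comp_apply, coeff_C_mul, aux_coeff_CX_add_X_pow]
    rw [mul_smul_comm]
  rw [Finset.sum_congr rfl h3] at h2
  exact h2


variable (φ : A →ₐ[k] A[X]) (hφ : IsExponentialMap φ)

include hφ

lemma aux_coeff_zero (a : A) : (φ a).coeff 0 = a := by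
  rw [coeff_zero_eq_eval_zero, hφ.1 a]

lemma aux_mem_iff (a : A) : a ∈ expInv φ ↔ (φ a).natDegree = 0 := by
  constructor
  · intro h
    have : φ a = C a := h
    rw [this, natDegree_C]
  · intro h
    have h2 : φ a = C ((φ a).coeff 0) := eq_C_of_natDegree_eq_zero h
    rw [aux_coeff_zero φ hφ] at h2
    exact h2

/-- D1 : leading coefficient is invariant -/
lemma aux_leadingCoeff_mem (a : A) : (φ a).leadingCoeff ∈ expInv φ := by
  have h := aux_key φ hφ a ((φ a).natDegree)
  have h2 : ∀ i ∈ Finset.range ((φ a).natDegree + 1),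
      C ((i.choose (φ a).natDegree : A) * (φ a).coeff i) * (X : A[X]) ^ (i - (φ a).natDegree)
      = if i = (φ a).natDegree then C ((φ a).coeff i) else 0 := by
    intro i hi
    rw [Finset.mem_range] at hi
    by_cases hieq : i = (φ a).natDegree
    · rw [if_pos hieq, hieq, Nat.choose_self, Nat.cast_one, one_mul, Nat.sub_self,
        pow_zero, mul_one]
    · rw [if_neg hieq, Nat.choose_eq_zero_of_lt (by omega), Nat.cast_zero, zero_mul, C_0,
        zero_mul]
  rw [Finset.sum_congr rfl h2, Finset.sum_ite_eq' _ _ _] at h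
  rw [if_pos (Finset.mem_range.mpr (by omega))] at h
  exact h

/-- D2 : degree bound on coefficients -/
lemma aux_coeff_natDegree_le (a : A) (j : ℕ) :
    (φ ((φ a).coeff j)).natDegree ≤ (φ a).natDegree - j := by
  rw [aux_key φ hφ a j]
  refine natDegree_sum_le_of_forall_le _ _ (fun i hi => ?_)
  rw [Finset.mem_range] at hi
  refine le_trans (natDegree_C_mul_le _ _) ?_
  rw [natDegree_X_pow]
  omega

/-- D3 : top coefficient of φ of a coefficient -/
lemma aux_coeff_top (a : A) (j : ℕ) (hj : j ≤ (φ a).natDegree) :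
    (φ ((φ a).coeff j)).coeff ((φ a).natDegree - j)
      = ((φ a).natDegree.choose j : A) * ((φ a).coeff (φ a).natDegree) := by
  set d := (φ a).natDegree with hd
  rw [aux_key φ hφ a j, finset_sum_coeff]
  rw [Finset.sum_eq_single d]
  · rw [coeff_C_mul, coeff_X_pow, if_pos rfl, mul_one]
  · intro i hi hine
    rw [Finset.mem_range] at hi
    rcases lt_or_ge i j with h1 | h1
    · rw [Nat.choose_eq_zero_of_lt h1, Nat.cast_zero, zero_mul, C_0, zero_mul, coeff_zero]
    · rw [coeff_C_mul, coeff_X_pow, if_neg (by omega), mul_zero]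
  · intro h
    exact absurd (Finset.mem_range.mpr (by omega)) h

end Aux

section Slice

variable {k A : Type*} [Field k] [CommRing A] [IsDomain A] [Algebra k A]
variable (φ : A →ₐ[k] A[X]) (hφ : IsExponentialMap φ) (sl : A)
  (hsl : sl ∉ expInv φ)
  (hmin : ∀ b : A, b ∉ expInv φ → (φ sl).natDegree ≤ (φ b).natDegree)

include hφ hsl

lemma aux_n_pos : 1 ≤ (φ sl).natDegree := by
  rcases Nat.eq_zero_or_pos (φ sl).natDegree with h | h
  · exact absurd ((aux_mem_iff φ hφ sl).mpr h) hsl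
  · exact h

lemma aux_phi_sl_ne : φ sl ≠ 0 := by
  intro h
  have h1 : (φ sl).natDegree = 0 := by rw [h, natDegree_zero]
  exact hsl ((aux_mem_iff φ hφ sl).mpr h1)

lemma aux_c_ne : (φ sl).leadingCoeff ≠ 0 :=
  leadingCoeff_ne_zero.mpr (aux_phi_sl_ne φ hφ sl hsl)

lemma aux_c_mem : (φ sl).leadingCoeff ∈ expInv φ := aux_leadingCoeff_mem φ hφ sl

include hmin

/-- middle binomial coefficients of `n` vanish in `A` -/
lemma aux_choose_zero (j : ℕ) (hj0 : 0 < j) (hjn : j < (φ sl).natDegree) :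
    (((φ sl).natDegree.choose j : A)) = 0 := by
  set n := (φ sl).natDegree with hn
  have hmem : (φ sl).coeff j ∈ expInv φ := by
    by_contra hne
    have h1 := hmin _ hne
    have h2 := aux_coeff_natDegree_le φ hφ sl j
    omega
  have hC : φ ((φ sl).coeff j) = C ((φ sl).coeff j) := hmem
  have h3 := aux_coeff_top φ hφ sl j (le_of_lt hjn)
  rw [hC, coeff_C, if_neg (by omega)] at h3
  have h4 : (φ sl).coeff n = (φ sl).leadingCoeff := rfl
  rw [h4] at h3
  rcases mul_eq_zero.mp h3.symm with h5 | h5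
  · exact h5
  · exact absurd h5 (aux_c_ne φ hφ sl hsl)

/-- divisibility of all degrees by n, given a good-j finder -/
lemma aux_dvd
    (hjfind : ∀ d : ℕ, (φ sl).natDegree ≤ d → ¬ (φ sl).natDegree ∣ d →
      ∃ j, 0 < j ∧ j ≤ d ∧ ((d.choose j : A) ≠ 0) ∧ ¬ (φ sl).natDegree ∣ (d - j)) :
    ∀ b : A, (φ sl).natDegree ∣ (φ b).natDegree := by
  set n := (φ sl).natDegree with hn
  suffices H : ∀ d : ℕ, ∀ b : A, (φ b).natDegree ≤ d → n ∣ (φ b).natDegree by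
    exact fun b => H _ b le_rfl
  intro d
  induction d with
  | zero =>
    intro b hb
    rw [Nat.le_zero.mp hb]
    exact dvd_zero n
  | succ d ih =>
    intro b hb
    by_cases hd : n ∣ (φ b).natDegree
    · exact hd
    · exfalso
      have hb0 : (φ b).natDegree ≠ 0 := fun h => hd (h ▸ dvd_zero n)
      have hbmem : b ∉ expInv φ := fun h => hb0 ((aux_mem_iff φ hφ b).mp h)
      have hnd : n ≤ (φ b).natDegree := hmin b hbmem
      obtain ⟨j, hj0, hjle, hcast, hnd2⟩ := hjfind _ hnd hd
      have h1 := aux_coeff_natDegree_le φ hφ b j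
      have hlc : (φ b).coeff (φ b).natDegree ≠ 0 := by
        have : φ b ≠ 0 := fun h => hb0 (by rw [h, natDegree_zero])
        exact leadingCoeff_ne_zero.mpr this
      have h2 : (φ ((φ b).coeff j)).coeff ((φ b).natDegree - j) ≠ 0 := by
        rw [aux_coeff_top φ hφ b j hjle]
        exact mul_ne_zero hcast hlc
      have h3 : (φ ((φ b).coeff j)).natDegree = (φ b).natDegree - j :=
        natDegree_eq_of_le_of_coeff_ne_zero h1 h2
      have h4 : (φ ((φ b).coeff j)).natDegree ≤ d := by omega
      have h5 := ih _ h4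
      rw [h3] at h5
      exact hnd2 h5

/-- main membership lemma -/
lemma aux_main
    (hjfind : ∀ d : ℕ, (φ sl).natDegree ≤ d → ¬ (φ sl).natDegree ∣ d →
      ∃ j, 0 < j ∧ j ≤ d ∧ ((d.choose j : A) ≠ 0) ∧ ¬ (φ sl).natDegree ∣ (d - j)) :
    ∀ b : A, ∃ m : ℕ, (φ sl).leadingCoeff ^ m * b ∈
      Subring.closure ((expInv φ : Set A) ∪ {sl}) := by
  set n := (φ sl).natDegree with hn
  set c := (φ sl).leadingCoeff with hc
  set T := Subring.closure ((expInv φ : Set A) ∪ {sl}) with hT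
  have hcT : c ∈ T := Subring.subset_closure (Or.inl (aux_c_mem φ hφ sl hsl))
  have hsT : sl ∈ T := Subring.subset_closure (Or.inr rfl)
  suffices H : ∀ d : ℕ, ∀ b : A, (φ b).natDegree ≤ d → ∃ m : ℕ, c ^ m * b ∈ T by
    exact fun b => H _ b le_rfl
  intro d
  induction d with
  | zero =>
    intro b hb
    refine ⟨0, ?_⟩
    rw [pow_zero, one_mul]
    exact Subring.subset_closure (Or.inl ((aux_mem_iff φ hφ b).mpr (Nat.le_zero.mp hb)))
  | succ d ih =>
    intro b hb
    by_cases hb0 : (φ b).natDegree = 0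
    · refine ⟨0, ?_⟩
      rw [pow_zero, one_mul]
      exact Subring.subset_closure (Or.inl ((aux_mem_iff φ hφ b).mpr hb0))
    · have hbmem : b ∉ expInv φ := fun h => hb0 ((aux_mem_iff φ hφ b).mp h)
      have hnd : n ≤ (φ b).natDegree := hmin b hbmem
      have hdvd : n ∣ (φ b).natDegree := aux_dvd φ hφ sl hsl hmin hjfind b
      obtain ⟨q, hq⟩ := hdvd
      have hq1 : 1 ≤ q := by
        rcases Nat.eq_zero_or_pos q with h0 | h0
        · exfalso; rw [h0, mul_zero] at hq; omega
        · exact h0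
      set β := (φ b).leadingCoeff with hβ
      have hβmem : β ∈ expInv φ := aux_leadingCoeff_mem φ hφ b
      set b' := c ^ q * b - β * sl ^ q with hb'
      have hφc : φ c = C c := aux_c_mem φ hφ sl hsl
      have hφβ : φ β = C β := hβmem
      have hφb' : φ b' = C (c ^ q) * φ b - C β * (φ sl) ^ q := by
        rw [hb', map_sub, map_mul, map_mul, map_pow, map_pow, hφc, hφβ, map_pow]
      have hnpow : ((φ sl) ^ q).natDegree = (φ b).natDegree := by
        rw [natDegree_pow, ← hn, hq]
        exact mul_comm q n
      have hdb' : (φ b').natDegree ≤ (φ b).natDegree - 1 := by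
        rw [natDegree_le_iff_coeff_eq_zero]
        intro m hm
        have hm' : (φ b).natDegree ≤ m := by omega
        rw [hφb', coeff_sub, coeff_C_mul, coeff_C_mul]
        rcases eq_or_lt_of_le hm' with h1 | h1
        · have e1 : (φ b).coeff m = β := by rw [← h1, coeff_natDegree]
          have e2 : ((φ sl) ^ q).coeff m = c ^ q := by
            rw [← h1, ← hnpow, coeff_natDegree, leadingCoeff_pow]
          rw [e1, e2]
          ring
        · rw [coeff_eq_zero_of_natDegree_lt h1, coeff_eq_zero_of_natDegree_lt (by omega),
            mul_zero, mul_zero, sub_zero]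
      obtain ⟨m', hm'⟩ := ih b' (by omega)
      refine ⟨m' + q, ?_⟩
      have hid : c ^ (m' + q) * b = c ^ m' * b' + c ^ m' * β * sl ^ q := by
        rw [hb']; ring
      rw [hid]
      exact T.add_mem hm' (T.mul_mem (T.mul_mem (T.pow_mem hcT m') (Subring.subset_closure (Or.inl hβmem))) (T.pow_mem hsT q))

/-- transcendence of the local slice over the invariant ring -/
lemma aux_trans (N : ℕ) (ρ : ℕ → A) (hρ : ∀ i, ρ i ∈ expInv φ)
    (hsum : (∑ i ∈ Finset.range N, ρ i * sl ^ i) = 0) :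
    ∀ i, i < N → ρ i = 0 := by
  set g : A[X] := ∑ i ∈ Finset.range N, C (ρ i) * X ^ i with hg
  have hφsum : φ (∑ i ∈ Finset.range N, ρ i * sl ^ i)
      = ∑ i ∈ Finset.range N, C (ρ i) * (φ sl) ^ i := by
    rw [map_sum]
    refine Finset.sum_congr rfl (fun i _ => ?_)
    rw [map_mul, map_pow, hρ i]
  have hcomp : g.comp (φ sl) = ∑ i ∈ Finset.range N, C (ρ i) * (φ sl) ^ i := by
    rw [hg, Polynomial.comp]
    rw [Polynomial.eval₂_finset_sum]
    refine Finset.sum_congr rfl (fun i _ => ?_)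
    rw [eval₂_mul, eval₂_C, eval₂_X_pow]
  have hzero : g.comp (φ sl) = 0 := by
    rw [hcomp, ← hφsum, hsum, map_zero]
  have hg0 : g = 0 := by
    by_contra hne
    have h1 : (g.comp (φ sl)).leadingCoeff
        = g.leadingCoeff * (φ sl).leadingCoeff ^ g.natDegree := by
      apply leadingCoeff_comp
      have := aux_n_pos φ hφ sl hsl
      omega
    rw [hzero, leadingCoeff_zero] at h1
    have h2 := mul_ne_zero (leadingCoeff_ne_zero.mpr hne)
      (pow_ne_zero g.natDegree (aux_c_ne φ hφ sl hsl))
    exact h2 h1.symm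
  intro i hi
  have h3 : g.coeff i = ρ i := by
    rw [hg, finset_sum_coeff]
    rw [Finset.sum_eq_single i]
    · rw [coeff_C_mul, coeff_X_pow, if_pos rfl, mul_one]
    · intro b _ hbne
      rw [coeff_C_mul, coeff_X_pow, if_neg (fun h => hbne h.symm), mul_zero]
    · intro h
      exact absurd (Finset.mem_range.mpr hi) h
  rw [← h3, hg0, coeff_zero]

end Slice

/-- **Lemma 2.1(iv)**: for a non-trivial exponential map `φ` on an affine domain `A` over `k`,
there is a nonzero invariant `c` such that `A[c⁻¹]` is a polynomial ring in one variable
over `A^φ[c⁻¹]`.  Here `A^φ[c⁻¹]` and `A[c⁻¹]` are formalized as arbitrary localizations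
`Rc` of `A^φ` at `c` and `Ac` of `A` at `c`, with `Ac` an `Rc`-algebra compatibly with the
inclusion `A^φ ⊆ A`. -/
theorem expInv_localization_polynomial {k A : Type*} [Field k] [CommRing A] [IsDomain A]
    [Algebra k A] [Algebra.FiniteType k A] (φ : A →ₐ[k] A[X])
    (hφ : IsExponentialMap φ) (hnt : expInv φ ≠ ⊤) :
    ∃ c : expInv φ, (c : A) ≠ 0 ∧
      ∀ (Rc Ac : Type) [CommRing Rc] [CommRing Ac]
        [Algebra (expInv φ) Rc] [IsLocalization.Away c Rc]
        [Algebra A Ac] [IsLocalization.Away (c : A) Ac]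
        [Algebra Rc Ac] [Algebra (expInv φ) Ac]
        [IsScalarTower (expInv φ) Rc Ac] [IsScalarTower (expInv φ) A Ac],
        Nonempty (Ac ≃ₐ[Rc] Polynomial Rc) := by
  classical
  -- pick an element not in the invariant ring
  have hb0 : ∃ b : A, b ∉ expInv φ := by
    by_contra h
    push_neg at h
    exact hnt (top_unique fun x _ => h x)
  obtain ⟨b₀, hb₀⟩ := hb0
  -- the minimal positive degree and a local slice
  set S : Set ℕ := {d | ∃ b : A, b ∉ expInv φ ∧ (φ b).natDegree = d} with hS
  have hSne : S.Nonempty := ⟨_, b₀, hb₀, rfl⟩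
  obtain ⟨sl, hsl, hsldeg⟩ := Nat.sInf_mem hSne
  have hmin : ∀ b : A, b ∉ expInv φ → (φ sl).natDegree ≤ (φ b).natDegree := by
    intro b hb
    rw [hsldeg]
    exact Nat.sInf_le ⟨b, hb, rfl⟩
  have hnpos : 1 ≤ (φ sl).natDegree := aux_n_pos φ hφ sl hsl
  set cA : A := (φ sl).leadingCoeff with hcA
  have hcmem : cA ∈ expInv φ := aux_c_mem φ hφ sl hsl
  have hcne : cA ≠ 0 := aux_c_ne φ hφ sl hsl
  -- good-j finder, by characteristic
  have hjfind : ∀ d : ℕ, (φ sl).natDegree ≤ d → ¬ (φ sl).natDegree ∣ d →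
      ∃ j, 0 < j ∧ j ≤ d ∧ ((d.choose j : A) ≠ 0) ∧ ¬ (φ sl).natDegree ∣ (d - j) := by
    obtain ⟨p, hp⟩ := CharP.exists k
    rcases CharP.char_is_prime_or_zero k p with hpp | hp0
    · haveI : CharP A p := charP_of_injective_algebraMap (algebraMap k A).injective p
      have hbin : ∀ j, 0 < j → j < (φ sl).natDegree → p ∣ (φ sl).natDegree.choose j := by
        intro j h1 h2
        exact (CharP.cast_eq_zero_iff A p _).mp (aux_choose_zero φ hφ sl hsl hmin j h1 h2)
      obtain ⟨e, he⟩ := aux_eq_pow_of_dvd_choose hpp hnpos hbin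
      intro d hnd hdnd
      obtain ⟨j, hj0, hjle, hnp, hnd2⟩ := aux_exists_good_j hpp e d (he ▸ hnd) (he ▸ hdnd)
      refine ⟨j, hj0, hjle, ?_, he ▸ hnd2⟩
      intro hc
      exact hnp ((CharP.cast_eq_zero_iff A p _).mp hc)
    · subst hp0
      haveI : CharZero k := CharP.charP_to_charZero k
      haveI : CharZero A := charZero_of_injective_algebraMap (algebraMap k A).injective
      have hn1 : (φ sl).natDegree = 1 := by
        by_contra hne
        have h2 : 1 < (φ sl).natDegree := by omega
        have h3 := aux_choose_zero φ hφ sl hsl hmin 1 one_pos h2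
        rw [Nat.choose_one_right, Nat.cast_eq_zero] at h3
        omega
      intro d hnd hdnd
      rw [hn1] at hdnd
      exact absurd (one_dvd d) hdnd
  -- the invariant element c
  refine ⟨⟨cA, hcmem⟩, hcne, ?_⟩
  intro Rc Ac _ _ _ _ _ _ _ _ _ _
  set c : expInv φ := ⟨cA, hcmem⟩ with hcdef
  set pt : Ac := algebraMap A Ac sl with hpt
  set θ : Polynomial Rc →ₐ[Rc] Ac := Polynomial.aeval pt with hθ
  -- compatibility of algebra maps
  have hART : ∀ (x : A) (hx : x ∈ expInv φ),
      algebraMap A Ac x = algebraMap Rc Ac (algebraMap (expInv φ) Rc ⟨x, hx⟩) := by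
    intro x hx
    calc algebraMap A Ac x = x • (1 : Ac) := Algebra.algebraMap_eq_smul_one x
      _ = (⟨x, hx⟩ : expInv φ) • (1 : Ac) := rfl
      _ = (⟨x, hx⟩ : expInv φ) • ((1 : Rc) • (1 : Ac)) := by rw [one_smul]
      _ = ((⟨x, hx⟩ : expInv φ) • (1 : Rc)) • (1 : Ac) := (smul_assoc _ _ _).symm
      _ = (algebraMap (expInv φ) Rc ⟨x, hx⟩) • (1 : Ac) := by
            rw [Algebra.algebraMap_eq_smul_one]
      _ = algebraMap Rc Ac (algebraMap (expInv φ) Rc ⟨x, hx⟩) :=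
            (Algebra.algebraMap_eq_smul_one _).symm
  -- invertibility of c
  have hu : IsUnit (algebraMap (expInv φ) Rc c) :=
    IsLocalization.Away.algebraMap_isUnit (S := Rc) c
  set w : Rc := ↑hu.unit⁻¹ with hw
  set v : Ac := algebraMap Rc Ac w with hv
  have hcv : algebraMap A Ac cA * v = 1 := by
    rw [hART cA hcmem, hv, ← map_mul, ← hcdef, ← IsUnit.unit_spec hu, hw, Units.mul_inv,
      map_one]
  have hpows : ∀ t : ℕ, (algebraMap A Ac cA) ^ t * v ^ t = 1 := by
    intro t
    rw [← mul_pow, hcv, one_pow]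
  -- range facts
  have hvrange : v ∈ θ.range := ⟨C w, aeval_C pt w⟩
  have hrangeT : ∀ t ∈ Subring.closure ((expInv φ : Set A) ∪ {sl}),
      algebraMap A Ac t ∈ θ.range := by
    intro t ht
    induction ht using Subring.closure_induction with
    | mem x hx =>
      rcases hx with hx | hx
      · rw [hART x hx]
        exact θ.range.algebraMap_mem _
      · rw [Set.mem_singleton_iff] at hx
        subst hx
        exact ⟨X, aeval_X pt⟩
    | zero => rw [map_zero]; exact zero_mem _
    | one => rw [map_one]; exact one_mem _
    | add x y hx hy ihx ihy => rw [map_add]; exact add_mem ihx ihy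
    | neg x hx ihx => rw [map_neg]; exact neg_mem ihx
    | mul x y hx hy ihx ihy => rw [map_mul]; exact mul_mem ihx ihy
  -- surjectivity
  have hsurj : Function.Surjective θ := by
    intro x
    set a : A := (IsLocalization.Away.sec cA x).1 with ha
    set nn : ℕ := (IsLocalization.Away.sec cA x).2 with hnn
    have hx : x * algebraMap A Ac (cA ^ nn) = algebraMap A Ac a :=
      IsLocalization.Away.sec_spec cA x
    obtain ⟨m, hmT⟩ := aux_main φ hφ sl hsl hmin hjfind a
    have h3 : algebraMap A Ac a = x * (algebraMap A Ac cA) ^ nn := by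
      rw [← hx, map_pow]
    have hxval : x = algebraMap A Ac (cA ^ m * a) * v ^ (m + nn) := by
      calc x = x * ((algebraMap A Ac cA) ^ (m + nn) * v ^ (m + nn)) := by
                rw [hpows, mul_one]
        _ = (x * (algebraMap A Ac cA) ^ nn) * (algebraMap A Ac cA) ^ m * v ^ (m + nn) := by
                rw [pow_add]; ring
        _ = algebraMap A Ac (cA ^ m * a) * v ^ (m + nn) := by
                rw [← h3, map_mul, map_pow]; ring
    have hmem : algebraMap A Ac (cA ^ m * a) * v ^ (m + nn) ∈ θ.range :=
      mul_mem (hrangeT _ hmT) (pow_mem hvrange _)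
    rw [← hxval] at hmem
    exact hmem
  -- injectivity
  have hinj : Function.Injective θ := by
    rw [injective_iff_map_eq_zero]
    intro p hp
    set N := p.natDegree with hN
    have hcoef : ∀ i : ℕ, ∃ (ri : expInv φ) (mi : ℕ),
        p.coeff i * algebraMap (expInv φ) Rc (c ^ mi) = algebraMap (expInv φ) Rc ri := by
      intro i
      exact ⟨(IsLocalization.Away.sec c (p.coeff i)).1, (IsLocalization.Away.sec c (p.coeff i)).2,
        IsLocalization.Away.sec_spec c (p.coeff i)⟩
    choose ri mi hri using hcoef
    set M := (Finset.range (N + 1)).sup mi with hM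
    set ρ : ℕ → A := fun i => (ri i : A) * cA ^ (M - mi i) with hρ
    have hρmem : ∀ i, ρ i ∈ expInv φ := by
      intro i
      exact (expInv φ).mul_mem (ri i).2 ((expInv φ).pow_mem hcmem _)
    have hkey : ∀ i, i ≤ N → algebraMap (expInv φ) Rc ⟨ρ i, hρmem i⟩
        = p.coeff i * algebraMap (expInv φ) Rc (c ^ M) := by
      intro i hi
      have hmile : mi i ≤ M := Finset.le_sup (Finset.mem_range.mpr (by omega))
      have hsplit : (⟨ρ i, hρmem i⟩ : expInv φ) = ri i * c ^ (M - mi i) := by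
        apply Subtype.ext
        rfl
      have hcM : (c : expInv φ) ^ M = c ^ mi i * c ^ (M - mi i) := by
        rw [← pow_add]
        congr 1
        omega
      rw [hsplit, map_mul, ← hri i, hcM, map_mul]
      ring
    -- the sum vanishes in Ac
    have hsum0 : ∑ i ∈ Finset.range (N + 1), algebraMap Rc Ac (p.coeff i) * pt ^ i = 0 := by
      have h1 := (Polynomial.aeval_eq_sum_range (R := Rc) (p := p) pt).symm.trans hp
      simp only [Algebra.smul_def] at h1
      exact h1
    have hAz : algebraMap A Ac (∑ i ∈ Finset.range (N + 1), ρ i * sl ^ i) = 0 := by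
      rw [map_sum]
      have hterm : ∀ i ∈ Finset.range (N + 1), algebraMap A Ac (ρ i * sl ^ i)
          = (algebraMap Rc Ac (p.coeff i) * pt ^ i)
            * algebraMap Rc Ac (algebraMap (expInv φ) Rc (c ^ M)) := by
        intro i hi
        rw [Finset.mem_range] at hi
        rw [map_mul, map_pow, hART (ρ i) (hρmem i), hkey i (by omega), map_mul]
        rw [hpt]
        ring
      rw [Finset.sum_congr rfl hterm, ← Finset.sum_mul, hsum0, zero_mul]
    obtain ⟨m0, hz2⟩ := (IsLocalization.map_eq_zero_iff (Submonoid.powers cA) Ac _).mp hAz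
    obtain ⟨nn2, hnn2⟩ := m0.2
    rw [← hnn2] at hz2
    have hSig0 : (∑ i ∈ Finset.range (N + 1), ρ i * sl ^ i) = 0 := by
      rcases mul_eq_zero.mp hz2 with h | h
      · exact absurd h (pow_ne_zero _ hcne)
      · exact h
    have htr := aux_trans φ hφ sl hsl hmin (N + 1) ρ hρmem hSig0
    have hcoeff0 : ∀ i, i ≤ N → p.coeff i = 0 := by
      intro i hi
      have h0 : (⟨ρ i, hρmem i⟩ : expInv φ) = 0 := Subtype.ext (htr i (by omega))
      have h1 := hkey i hi
      rw [h0, map_zero] at h1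
      have hMu : IsUnit (algebraMap (expInv φ) Rc (c ^ M)) := by
        rw [map_pow]
        exact hu.pow M
      exact (hMu.mul_left_eq_zero).mp h1.symm
    apply Polynomial.ext
    intro i
    rcases le_or_gt i N with hi | hi
    · rw [hcoeff0 i hi, coeff_zero]
    · rw [coeff_eq_zero_of_natDegree_lt hi, coeff_zero]
  exact ⟨(AlgEquiv.ofBijective θ ⟨hinj, hsurj⟩).symm⟩
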